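/- arXiv:1610.03715 — 4 statements merged into one kernel-verified Lean document; each statement's English description precedes it below -/
import Mathlib

section
/- Let H, μ > 0 and suppose the belief λ̃(t) in the withhold region is λ̃(t) = α·e^(-2Ht₁-H(t-t₁))·g(t-t₁) / (α·e^(-2Ht₁-H(t-t₁))·g(t-t₁) + 1 - α), where g(τ) = e^(-Hτ) + ∫₀^τ H·e^(-sH)·e^(-(τ-s)μ) ds. Then λ̃(t) is strictly decreasing in t for t ≥ t₁. -/
open Real

noncomputable def Ifun (H μ : ℝ) (τ : ℝ) : ℝ :=
  ∫ s in (0:ℝ)..τ, H * Real.exp ((μ - H) * s)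

noncomputable def hfun (H μ : ℝ) (τ : ℝ) : ℝ :=
  Real.exp (-2 * H * τ) + Real.exp (-(H + μ) * τ) * Ifun H μ τ

lemma Ifun_hasDerivAt (H μ τ : ℝ) :
    HasDerivAt (Ifun H μ) (H * Real.exp ((μ - H) * τ)) τ := by
  have hc : Continuous fun s : ℝ => H * Real.exp ((μ - H) * s) := by continuity
  unfold Ifun
  exact (hc.integral_hasStrictDerivAt 0 τ).hasDerivAt

lemma Ifun_nonneg (H μ : ℝ) (hH : 0 < H) {τ : ℝ} (hτ : 0 ≤ τ) : 0 ≤ Ifun H μ τ := by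
  apply intervalIntegral.integral_nonneg hτ
  intro s _
  positivity

lemma hfun_hasDerivAt (H μ τ : ℝ) :
    HasDerivAt (hfun H μ)
      (-H * Real.exp (-2 * H * τ) - (H + μ) * (Real.exp (-(H + μ) * τ) * Ifun H μ τ)) τ := by
  have d1 : HasDerivAt (fun x : ℝ => Real.exp (-2 * H * x))
      (Real.exp (-2 * H * τ) * (-2 * H)) τ := by simpa using ((hasDerivAt_id τ).const_mul (-2 * H)).exp
  have d2 : HasDerivAt (fun x : ℝ => Real.exp (-(H + μ) * x))
      (Real.exp (-(H + μ) * τ) * (-(H + μ))) τ := by simpa using ((hasDerivAt_id τ).const_mul (-(H + μ))).exp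
  have d3 := (d2.mul (Ifun_hasDerivAt H μ τ))
  have d4 := d1.add d3
  have key : Real.exp (-(H + μ) * τ) * (H * Real.exp ((μ - H) * τ))
      = H * Real.exp (-2 * H * τ) := by
    rw [show (-2 : ℝ) * H * τ = -(H + μ) * τ + (μ - H) * τ by ring, Real.exp_add]
    ring
  have : Real.exp (-2 * H * τ) * (-2 * H)
      + (Real.exp (-(H + μ) * τ) * (-(H + μ)) * Ifun H μ τ
        + Real.exp (-(H + μ) * τ) * (H * Real.exp ((μ - H) * τ)))
      = -H * Real.exp (-2 * H * τ) - (H + μ) * (Real.exp (-(H + μ) * τ) * Ifun H μ τ) := by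
    rw [key]; ring
  rw [← this]
  exact d4

lemma hfun_strictAntiOn (H μ : ℝ) (hH : 0 < H) (hμ : 0 < μ) :
    StrictAntiOn (hfun H μ) (Set.Ici 0) := by
  apply strictAntiOn_of_deriv_neg (convex_Ici 0)
  · exact fun τ _ => (hfun_hasDerivAt H μ τ).continuousAt.continuousWithinAt
  · intro τ hτ
    rw [interior_Ici] at hτ
    rw [(hfun_hasDerivAt H μ τ).deriv]
    have hI : 0 ≤ Ifun H μ τ := Ifun_nonneg H μ hH hτ.le
    have e1 : 0 < Real.exp (-2 * H * τ) := Real.exp_pos _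
    have e2 : 0 < Real.exp (-(H + μ) * τ) := Real.exp_pos _
    nlinarith [mul_pos hH e1, mul_nonneg e2.le hI,
      mul_nonneg (add_pos hH hμ).le (mul_nonneg e2.le hI)]

lemma hfun_pos (H μ : ℝ) (hH : 0 < H) {τ : ℝ} (hτ : 0 ≤ τ) : 0 < hfun H μ τ := by
  have hI : 0 ≤ Ifun H μ τ := Ifun_nonneg H μ hH hτ
  have e1 : 0 < Real.exp (-2 * H * τ) := Real.exp_pos _
  have e2 : 0 ≤ Real.exp (-(H + μ) * τ) := (Real.exp_pos _).le
  have := mul_nonneg e2 hI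
  unfold hfun
  linarith

theorem belief_strict_anti_withhold (H μ α t₁ : ℝ) (hH : 0 < H) (hμ : 0 < μ)
    (hα : α ∈ Set.Ioo (0:ℝ) 1) (ht₁ : 0 ≤ t₁)
    (g : ℝ → ℝ)
    (hg : ∀ τ : ℝ, g τ = Real.exp (-H * τ)
        + ∫ s in (0:ℝ)..τ, H * Real.exp (-s * H) * Real.exp (-(τ - s) * μ)) :
    StrictAntiOn (fun t : ℝ =>
      α * Real.exp (-2 * H * t₁ - H * (t - t₁)) * g (t - t₁) /
        (α * Real.exp (-2 * H * t₁ - H * (t - t₁)) * g (t - t₁) + 1 - α))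
      (Set.Ici t₁) := by
  obtain ⟨hα0, hα1⟩ := hα
  -- integral representation
  have intrep : ∀ τ : ℝ,
      (∫ s in (0:ℝ)..τ, H * Real.exp (-s * H) * Real.exp (-(τ - s) * μ))
        = Real.exp (-μ * τ) * ∫ s in (0:ℝ)..τ, H * Real.exp ((μ - H) * s) := by
    intro τ
    rw [← intervalIntegral.integral_const_mul]
    apply intervalIntegral.integral_congr
    intro s _
    simp only
    rw [show H * Real.exp (-s * H) * Real.exp (-(τ - s) * μ)
        = H * Real.exp (-s * H + -(τ - s) * μ) by rw [Real.exp_add]; ring,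
      show Real.exp (-μ * τ) * (H * Real.exp ((μ - H) * s))
        = H * Real.exp (-μ * τ + (μ - H) * s) by rw [Real.exp_add]; ring,
      show -s * H + -(τ - s) * μ = -μ * τ + (μ - H) * s by ring]
  have gval : ∀ τ : ℝ, Real.exp (-H * τ) * g τ = hfun H μ τ := by
    intro τ
    rw [hg τ, intrep τ, hfun, Ifun,
      show (-2 : ℝ) * H * τ = -H * τ + -H * τ by ring, Real.exp_add,
      show -(H + μ) * τ = -H * τ + -μ * τ by ring, Real.exp_add]
    ring
  have xval : ∀ t : ℝ,
      α * Real.exp (-2 * H * t₁ - H * (t - t₁)) * g (t - t₁)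
        = (α * Real.exp (-2 * H * t₁)) * hfun H μ (t - t₁) := by
    intro t
    rw [show -2 * H * t₁ - H * (t - t₁) = -2 * H * t₁ + -H * (t - t₁) by ring, Real.exp_add]
    rw [← gval (t - t₁)]
    ring
  have hK : 0 < α * Real.exp (-2 * H * t₁) := by positivity
  intro a ha b hb hab
  simp only [Set.mem_Ici] at ha hb
  simp only
  rw [xval a, xval b]
  set K := α * Real.exp (-2 * H * t₁)
  have hha : 0 < hfun H μ (a - t₁) := hfun_pos H μ hH (by linarith)
  have hhb : 0 < hfun H μ (b - t₁) := hfun_pos H μ hH (by linarith)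
  have hlt : hfun H μ (b - t₁) < hfun H μ (a - t₁) :=
    hfun_strictAntiOn H μ hH hμ (Set.mem_Ici.mpr (by linarith : (0:ℝ) ≤ a - t₁))
      (Set.mem_Ici.mpr (by linarith : (0:ℝ) ≤ b - t₁)) (by linarith)
  set x := K * hfun H μ (a - t₁) with hx
  set y := K * hfun H μ (b - t₁) with hy
  have hxpos : 0 < x := mul_pos hK hha
  have hypos : 0 < y := mul_pos hK hhb
  have hyx : y < x := by
    apply mul_lt_mul_of_pos_left hlt hK
  rw [div_lt_div_iff₀ (by linarith) (by linarith)]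
  nlinarith
end

section
/- For H, μ > 0 with H ≠ μ, p₁, p₂ > 0, and t₁ ≥ 0, the function f(t) = H·[ (p₁+p₂)/2 + ((p₁+p₂)/2) / (1 + (H/(μ-H))·(1 - e^((H-μ)(t-t₁))) ) ] is strictly decreasing in t for t > t₁. -/
lemma exp_ratio_strictMono (c : ℝ) (hc : c ≠ 0) :
    StrictMono (fun s : ℝ => (Real.exp (c * s) - 1) / c) := by
  intro a b hab
  rcases hc.lt_or_gt with h | h
  · have hexp : Real.exp (c * b) < Real.exp (c * a) :=
      Real.exp_lt_exp.2 (by nlinarith)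
    exact (div_lt_div_right_of_neg h).2 (by linarith)
  · have hexp : Real.exp (c * a) < Real.exp (c * b) :=
      Real.exp_lt_exp.2 (by nlinarith)
    exact (div_lt_div_iff_of_pos_right h).2 (by linarith)

theorem exit_rhs_strict_anti (H μ p₁ p₂ t₁ : ℝ) (hH : 0 < H) (hμ : 0 < μ) (hne : H ≠ μ)
    (hp₁ : 0 < p₁) (hp₂ : 0 < p₂) (ht₁ : 0 ≤ t₁) :
    StrictAntiOn (fun t : ℝ =>
      H * ((p₁ + p₂) / 2 +
        ((p₁ + p₂) / 2) / (1 + (H / (μ - H)) * (1 - Real.exp ((H - μ) * (t - t₁))))))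
      (Set.Ioi t₁) := by
  set c : ℝ := H - μ with hc
  have hc0 : c ≠ 0 := sub_ne_zero.2 hne
  set g : ℝ → ℝ := fun s => (Real.exp (c * s) - 1) / c with hg
  have hmono := exp_ratio_strictMono c hc0
  -- rewrite denominator
  have key : ∀ t : ℝ, 1 + (H / (μ - H)) * (1 - Real.exp ((H - μ) * (t - t₁)))
      = 1 + H * g (t - t₁) := by
    intro t
    have hμH : μ - H ≠ 0 := sub_ne_zero.2 (Ne.symm hne)
    simp only [hg]
    rw [hc]
    field_simp
    ring
  intro a ha b hb hab
  simp only [hc, key]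
  have hga : 0 < g (a - t₁) := by
    have : g 0 < g (a - t₁) := hmono (by simpa using sub_pos.2 (Set.mem_Ioi.1 ha))
    simpa [hg] using this
  have hgb : g (a - t₁) < g (b - t₁) := hmono (by linarith)
  have hDa : 0 < 1 + H * g (a - t₁) := by nlinarith
  have hDb : 1 + H * g (a - t₁) < 1 + H * g (b - t₁) := by nlinarith
  have hA : 0 < (p₁ + p₂) / 2 := by linarith
  have := div_lt_div_of_pos_left hA hDa hDb
  nlinarith
end

section
/- For H, μ > 0 with H ≠ μ and t₁ ≥ 0, the numerator of the continuation value, namely N(t) = H(p₁+p₂)·e^(-H(t-t₁))·[ -(H/2)/(H-μ) + ((H/2)/(H-μ))·e^((H-μ)(t-t₁)) + (H/2+μ)/(H+μ) + ((H/2)/(H+μ))·e^(-(H+μ)(t₂-t)) ], is strictly decreasing in t on (t₁, t₂), given p₁, p₂ > 0 and t₂ > t₁. -/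
set_option maxHeartbeats 1000000 in
theorem continuation_numerator_strict_anti (H μ p₁ p₂ t₁ t₂ : ℝ)
    (hH : 0 < H) (hμ : 0 < μ) (hne : H ≠ μ)
    (hp₁ : 0 < p₁) (hp₂ : 0 < p₂) (ht₁ : 0 ≤ t₁) (ht : t₁ < t₂) :
    StrictAntiOn (fun t : ℝ =>
      H * (p₁ + p₂) * Real.exp (-H * (t - t₁)) *
        (-(H / 2) / (H - μ) + ((H / 2) / (H - μ)) * Real.exp ((H - μ) * (t - t₁))
          + (H / 2 + μ) / (H + μ)
          + ((H / 2) / (H + μ)) * Real.exp (-(H + μ) * (t₂ - t))))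
      (Set.Ioo t₁ t₂) := by
  have hC : (0:ℝ) < H * (p₁ + p₂) := by positivity
  have hHμ : H - μ ≠ 0 := sub_ne_zero.mpr hne
  have hHμ' : H + μ ≠ 0 := by positivity
  apply strictAntiOn_of_deriv_neg (convex_Ioo t₁ t₂)
  · fun_prop
  · intro t htt
    rw [interior_Ioo] at htt
    obtain ⟨h1, h2⟩ := htt
    -- derivatives of the inner exponents
    have e0 : HasDerivAt (fun t : ℝ => Real.exp (-H * (t - t₁)))
        (Real.exp (-H * (t - t₁)) * (-H)) t := by
      have h : HasDerivAt (fun t : ℝ => -H * (t - t₁)) (-H) t := by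
        simpa using ((hasDerivAt_id t).sub_const t₁).const_mul (-H)
      exact h.exp
    have e1 : HasDerivAt (fun t : ℝ => Real.exp ((H - μ) * (t - t₁)))
        (Real.exp ((H - μ) * (t - t₁)) * (H - μ)) t := by
      have h : HasDerivAt (fun t : ℝ => (H - μ) * (t - t₁)) (H - μ) t := by
        simpa using ((hasDerivAt_id t).sub_const t₁).const_mul (H - μ)
      exact h.exp
    have e2 : HasDerivAt (fun t : ℝ => Real.exp (-(H + μ) * (t₂ - t)))
        (Real.exp (-(H + μ) * (t₂ - t)) * (H + μ)) t := by
      have h : HasDerivAt (fun t : ℝ => -(H + μ) * (t₂ - t)) (H + μ) t := by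
        have := ((hasDerivAt_const t t₂).sub (hasDerivAt_id t)).const_mul (-(H + μ))
        simpa using this
      exact h.exp
    have gd : HasDerivAt (fun t : ℝ => H * (p₁ + p₂) * Real.exp (-H * (t - t₁)))
        (H * (p₁ + p₂) * (Real.exp (-H * (t - t₁)) * (-H))) t := e0.const_mul _
    have brd : HasDerivAt (fun t : ℝ =>
        -(H / 2) / (H - μ) + ((H / 2) / (H - μ)) * Real.exp ((H - μ) * (t - t₁))
          + (H / 2 + μ) / (H + μ)
          + ((H / 2) / (H + μ)) * Real.exp (-(H + μ) * (t₂ - t)))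
        ((H / 2) / (H - μ) * (Real.exp ((H - μ) * (t - t₁)) * (H - μ))
          + (H / 2) / (H + μ) * (Real.exp (-(H + μ) * (t₂ - t)) * (H + μ))) t := by
      have := (((hasDerivAt_const t (-(H / 2) / (H - μ))).add
        (e1.const_mul ((H / 2) / (H - μ)))).add
        (hasDerivAt_const t ((H / 2 + μ) / (H + μ)))).add
        (e2.const_mul ((H / 2) / (H + μ)))
      simpa [Pi.add_def] using this
    have hd := gd.mul brd
    simp only [Pi.mul_def] at hd
    rw [hd.deriv]
    -- abbreviations
    set E0 := Real.exp (-H * (t - t₁)) with hE0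
    set E1 := Real.exp ((H - μ) * (t - t₁)) with hE1
    set E2 := Real.exp (-(H + μ) * (t₂ - t)) with hE2
    have hE0pos : 0 < E0 := Real.exp_pos _
    set Br := -(H / 2) / (H - μ) + ((H / 2) / (H - μ)) * E1
          + (H / 2 + μ) / (H + μ) + ((H / 2) / (H + μ)) * E2 with hBr
    set Br' := (H / 2) / (H - μ) * (E1 * (H - μ)) + (H / 2) / (H + μ) * (E2 * (H + μ)) with hBr'
    have hfact : H * (p₁ + p₂) * (E0 * (-H)) * Br + H * (p₁ + p₂) * E0 * Br'
        = H * (p₁ + p₂) * E0 * (-H * Br + Br') := by ring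
    rw [hfact]
    have hP : -H * Br + Br'
        = (H * μ / 2) / (H - μ) * (1 - E1) + (H * μ / 2) / (H + μ) * (E2 - 1) := by
      rw [hBr, hBr']
      field_simp
      ring
    have hterm2 : (H * μ / 2) / (H + μ) * (E2 - 1) < 0 := by
      have hE2lt : E2 < 1 := by
        rw [hE2]
        apply Real.exp_lt_one_iff.mpr
        have : 0 < t₂ - t := by linarith
        nlinarith
      have h0 : (0:ℝ) < (H * μ / 2) / (H + μ) := by positivity
      exact mul_neg_of_pos_of_neg h0 (by linarith)
    have hterm1 : (H * μ / 2) / (H - μ) * (1 - E1) < 0 := by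
      rcases lt_or_gt_of_ne hne with hlt | hgt
      · have hc : (H * μ / 2) / (H - μ) < 0 :=
          div_neg_of_pos_of_neg (by positivity) (by linarith)
        have hE1lt : E1 < 1 := by
          rw [hE1]
          apply Real.exp_lt_one_iff.mpr
          have h0 : 0 < t - t₁ := by linarith
          exact mul_neg_of_neg_of_pos (by linarith) h0
        exact mul_neg_of_neg_of_pos hc (by linarith)
      · have hc : (0:ℝ) < (H * μ / 2) / (H - μ) := by
          apply div_pos (by positivity) (by linarith)
        have hE1gt : 1 < E1 := by
          rw [hE1]
          apply Real.one_lt_exp_iff.mpr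
          have h0 : 0 < t - t₁ := by linarith
          exact mul_pos (by linarith) h0
        exact mul_neg_of_pos_of_neg hc (by linarith)
    have : -H * Br + Br' < 0 := by rw [hP]; linarith
    have hpos : 0 < H * (p₁ + p₂) * E0 := by positivity
    exact mul_neg_of_pos_of_neg hpos this
end

section
/- Let H, μ > 0 with H ≠ μ, α ∈ (0,1), t₁ ≥ 0, and suppose ((1-α)/α)·e^(2Ht₁) ≥ 1. Then D(t) = (-μ/(H-μ))·e^(H(t₁-t)) + (H/(H-μ))·e^(μ(t₁-t)) + ((1-α)/α)·e^(2Ht₁+H(t-t₁)) is strictly increasing in t for t > t₁. -/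
lemma key_ineq (H μ u : ℝ) (hH : 0 < H) (hμ : 0 < μ) (hne : H ≠ μ) (hu : 0 < u) :
    0 < H * μ / (H - μ) * (Real.exp (-(H*u)) - Real.exp (-(μ*u))) + H * Real.exp (H*u) := by
  have hsub : H - μ ≠ 0 := sub_ne_zero.mpr hne
  have hea : (1:ℝ) + H*u < Real.exp (H*u) := by
    have := Real.add_one_lt_exp (x := H*u) (by positivity)
    linarith
  have hcpos : 0 < Real.exp (-(μ*u)) := Real.exp_pos _
  have hbpos : 0 < Real.exp (-(H*u)) := Real.exp_pos _
  have hrw : H * μ / (H - μ) * (Real.exp (-(H*u)) - Real.exp (-(μ*u))) + H * Real.exp (H*u)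
      = (H * μ * (Real.exp (-(H*u)) - Real.exp (-(μ*u))) + H * Real.exp (H*u) * (H - μ)) / (H - μ) := by
    field_simp
  rw [hrw]
  rcases lt_or_gt_of_ne hne with hlt | hgt
  · -- H < μ : denominator negative, show numerator negative
    have hfact : Real.exp (-(H*u)) - Real.exp (-(μ*u)) < (μ - H) * u * Real.exp (-(H*u)) := by
      have h1 : Real.exp (-((μ-H)*u)) > 1 - (μ-H)*u := by
        have := Real.add_one_lt_exp (x := -((μ-H)*u)) (by nlinarith)
        linarith
      have h2 : Real.exp (-(H*u)) * Real.exp (-((μ-H)*u)) = Real.exp (-(μ*u)) := by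
        rw [← Real.exp_add]; ring_nf
      nlinarith
    have hab : Real.exp (H*u) * Real.exp (-(H*u)) = 1 := by
      rw [← Real.exp_add]; simp
    have h2 : (1:ℝ) + 2*(H*u) ≤ Real.exp (H*u) * Real.exp (H*u) := by
      nlinarith [mul_pos hH hu, sq_nonneg (H*u)]
    have e3 : Real.exp (H*u) * Real.exp (H*u) * Real.exp (-(H*u)) = Real.exp (H*u) := by
      rw [mul_assoc, hab, mul_one]
    have hkey : μ * (Real.exp (-(H*u)) - Real.exp (-(μ*u))) < (μ - H) * Real.exp (H*u) := by
      rcases le_or_gt ((μ - H) * u) 1 with hc | hc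
      · have hmu : μ * u < 1 + 2*(H*u) := by nlinarith
        have hstep : μ * (Real.exp (-(H*u)) - Real.exp (-(μ*u)))
            < μ * ((μ - H) * u * Real.exp (-(H*u))) := by nlinarith
        have hstep2 : μ * ((μ - H) * u * Real.exp (-(H*u))) ≤ (μ - H) * Real.exp (H*u) := by
          nlinarith [mul_lt_mul_of_pos_right hmu (mul_pos (sub_pos.mpr hlt) hbpos),
            mul_le_mul_of_nonneg_right
              (mul_le_mul_of_nonneg_left h2 (sub_pos.mpr hlt).le) hbpos.le, e3]
        linarith
      · have hgr : μ < (μ - H) * (Real.exp (H*u) * Real.exp (H*u)) := by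
          nlinarith [mul_le_mul_of_nonneg_left h2 (sub_pos.mpr hlt).le,
            mul_lt_mul_of_pos_left hc (by positivity : (0:ℝ) < 2*H)]
        have : μ * Real.exp (-(H*u)) < (μ - H) * Real.exp (H*u) := by
          nlinarith [mul_lt_mul_of_pos_right hgr hbpos, e3]
        nlinarith
    apply div_pos_of_neg_of_neg
    · nlinarith
    · linarith
  · -- H > μ : both positive
    have hfact : Real.exp (-(μ*u)) - Real.exp (-(H*u)) < (H - μ) * u * Real.exp (-(μ*u)) := by
      have h1 : Real.exp (-((H-μ)*u)) > 1 - (H-μ)*u := by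
        have := Real.add_one_lt_exp (x := -((H-μ)*u)) (by nlinarith)
        linarith
      have h2 : Real.exp (-(μ*u)) * Real.exp (-((H-μ)*u)) = Real.exp (-(H*u)) := by
        rw [← Real.exp_add]; ring_nf
      nlinarith
    have hcle : Real.exp (-(μ*u)) ≤ 1 := by
      rw [show (1:ℝ) = Real.exp 0 by simp]
      exact Real.exp_le_exp.mpr (by nlinarith)
    have s1 : μ * (Real.exp (-(μ*u)) - Real.exp (-(H*u))) < μ * ((H-μ)*u) * Real.exp (-(μ*u)) := by
      nlinarith
    have s2 : μ * ((H-μ)*u) * Real.exp (-(μ*u)) ≤ μ * ((H-μ)*u) := by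
      nlinarith [mul_pos hμ (mul_pos (sub_pos.mpr hgt) hu)]
    have s3 : μ * ((H-μ)*u) < (H-μ) * Real.exp (H*u) := by
      nlinarith [mul_lt_mul_of_pos_left hea (sub_pos.mpr hgt), mul_pos (sub_pos.mpr hgt) hu]
    apply div_pos
    · nlinarith
    · linarith

theorem continuation_denominator_strict_mono (H μ α t₁ : ℝ)
    (hH : 0 < H) (hμ : 0 < μ) (hne : H ≠ μ) (hα : α ∈ Set.Ioo (0:ℝ) 1) (ht₁ : 0 ≤ t₁)
    (hcond : ((1 - α) / α) * Real.exp (2 * H * t₁) ≥ 1) :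
    StrictMonoOn (fun t : ℝ =>
      (-μ / (H - μ)) * Real.exp (H * (t₁ - t)) + (H / (H - μ)) * Real.exp (μ * (t₁ - t))
        + ((1 - α) / α) * Real.exp (2 * H * t₁ + H * (t - t₁)))
      (Set.Ioi t₁) := by
  set C := (1 - α) / α with hC
  have hderiv : ∀ t : ℝ, HasDerivAt (fun t : ℝ =>
      (-μ / (H - μ)) * Real.exp (H * (t₁ - t)) + (H / (H - μ)) * Real.exp (μ * (t₁ - t))
        + C * Real.exp (2 * H * t₁ + H * (t - t₁)))
      ((-μ / (H - μ)) * (Real.exp (H * (t₁ - t)) * (-H))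
        + (H / (H - μ)) * (Real.exp (μ * (t₁ - t)) * (-μ))
        + C * (Real.exp (2 * H * t₁ + H * (t - t₁)) * H)) t := by
    intro t
    have h1 : HasDerivAt (fun t : ℝ => H * (t₁ - t)) (-H) t := by
      simpa using ((hasDerivAt_id t).const_sub t₁).const_mul H
    have h2 : HasDerivAt (fun t : ℝ => μ * (t₁ - t)) (-μ) t := by
      simpa using ((hasDerivAt_id t).const_sub t₁).const_mul μ
    have h3 : HasDerivAt (fun t : ℝ => 2 * H * t₁ + H * (t - t₁)) H t := by
      simpa using (((hasDerivAt_id t).sub_const t₁).const_mul H).const_add (2 * H * t₁)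
    exact ((h1.exp.const_mul _).add (h2.exp.const_mul _)).add (h3.exp.const_mul C)
  apply StrictMonoOn.mono ?_ (le_refl (Set.Ioi t₁))
  apply strictMonoOn_of_deriv_pos (convex_Ioi t₁)
  · exact (Continuous.continuousOn (by continuity))
  · intro t ht
    rw [interior_Ioi] at ht
    rw [(hderiv t).deriv]
    set u := t - t₁ with hu
    have hupos : 0 < u := sub_pos.mpr ht
    have key := key_ineq H μ u hH hμ hne hupos
    have e1 : H * (t₁ - t) = -(H * u) := by rw [hu]; ring
    have e2 : μ * (t₁ - t) = -(μ * u) := by rw [hu]; ring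
    have e3 : Real.exp (2 * H * t₁ + H * (t - t₁)) = Real.exp (2 * H * t₁) * Real.exp (H * u) := by
      rw [← Real.exp_add, hu]
    rw [e1, e2, e3]
    have hClarge : 1 ≤ C * Real.exp (2 * H * t₁) := hcond
    have hfinal : H * Real.exp (H * u) ≤ C * (Real.exp (2 * H * t₁) * Real.exp (H * u) * H) := by
      have := mul_le_mul_of_nonneg_right hClarge
        (by positivity : (0:ℝ) ≤ Real.exp (H * u) * H)
      nlinarith
    have goalrw : -μ/(H-μ) * (Real.exp (-(H*u)) * -H) + H/(H-μ) * (Real.exp (-(μ*u)) * -μ)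
        = H*μ/(H-μ) * (Real.exp (-(H*u)) - Real.exp (-(μ*u))) := by ring
    linarith [key, hfinal, goalrw]
end
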